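/- For every real x > 1/2, the digamma function satisfies ln(x - 1/2) < ψ(x) < ln(x). -/

import Mathlib

open Real Set Filter

noncomputable def digamma (x : ℝ) : ℝ := deriv (fun y => Real.log (Real.Gamma y)) x

lemma diff_logGamma {x : ℝ} (hx : 0 < x) :
    DifferentiableAt ℝ (fun y => Real.log (Real.Gamma y)) x := by
  refine DifferentiableAt.log ?_ (Real.Gamma_pos_of_pos hx).ne'
  refine Real.differentiableAt_Gamma fun m => ?_
  have : -(m:ℝ) ≤ 0 := neg_nonpos.mpr (Nat.cast_nonneg m)
  linarith

lemma logGamma_add_one {x : ℝ} (hx : 0 < x) :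
    Real.log (Real.Gamma (x+1)) = Real.log x + Real.log (Real.Gamma x) := by
  rw [Real.Gamma_add_one hx.ne', Real.log_mul hx.ne' (Real.Gamma_pos_of_pos hx).ne']

lemma digamma_rec {x : ℝ} (hx : 0 < x) : digamma (x+1) = digamma x + 1/x := by
  have hx1 : (0:ℝ) < x + 1 := by linarith
  have h1 : HasDerivAt (fun y => Real.log (Real.Gamma (y+1))) (digamma (x+1) * 1) x := by
    exact HasDerivAt.comp x (diff_logGamma hx1).hasDerivAt
      ((hasDerivAt_id x).add_const 1)
  have h2 : HasDerivAt (fun y => Real.log y + Real.log (Real.Gamma y)) (x⁻¹ + digamma x) x :=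
    (Real.hasDerivAt_log hx.ne').add (diff_logGamma hx).hasDerivAt
  have heq : (fun y => Real.log (Real.Gamma (y+1))) =ᶠ[nhds x]
      (fun y => Real.log y + Real.log (Real.Gamma y)) := by
    filter_upwards [eventually_gt_nhds hx] with y hy
    exact logGamma_add_one hy
  have h2' : HasDerivAt (fun y => Real.log (Real.Gamma (y+1))) (x⁻¹ + digamma x) x :=
    h2.congr_of_eventuallyEq heq
  have := h1.unique h2'
  rw [mul_one] at this
  rw [this, one_div]; ring

lemma digamma_le_log {x : ℝ} (hx : 0 < x) : digamma x ≤ Real.log x := by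
  have h := Real.convexOn_log_Gamma.deriv_le_slope (mem_Ioi.2 hx)
    (mem_Ioi.2 (by linarith : (0:ℝ) < x + 1)) (by linarith) (diff_logGamma hx)
  have hs : slope (Real.log ∘ Real.Gamma) x (x+1) = Real.log x := by
    rw [slope_def_field]
    simp only [Function.comp_apply]
    rw [logGamma_add_one hx]
    field_simp
    ring
  rw [hs] at h
  exact h

lemma log_le_digamma {x : ℝ} (hx : 0 < x) : Real.log x ≤ digamma (x+1) := by
  have h := Real.convexOn_log_Gamma.slope_le_deriv (mem_Ioi.2 hx)
    (mem_Ioi.2 (by linarith : (0:ℝ) < x + 1)) (by linarith)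
    (diff_logGamma (by linarith : (0:ℝ) < x+1))
  have hs : slope (Real.log ∘ Real.Gamma) x (x+1) = Real.log x := by
    rw [slope_def_field]
    simp only [Function.comp_apply]
    rw [logGamma_add_one hx]
    field_simp
    ring
  rw [hs] at h
  exact h

lemma digamma_lt_log {x : ℝ} (hx : 0 < x) : digamma x < Real.log x := by
  have h1 : digamma (x+1) ≤ Real.log (x+1) := digamma_le_log (by linarith)
  rw [digamma_rec hx] at h1
  have h2 : Real.log (x+1) - Real.log x < 1/x := by
    have hne : (x+1)/x ≠ 1 := by
      intro h
      rw [div_eq_one_iff_eq hx.ne'] at h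
      linarith
    have := Real.log_lt_sub_one_of_pos (by positivity : (0:ℝ) < (x+1)/x) hne
    rw [Real.log_div (by linarith) hx.ne'] at this
    have : Real.log (x+1) - Real.log x < (x+1)/x - 1 := this
    calc Real.log (x+1) - Real.log x < (x+1)/x - 1 := this
      _ = 1/x := by field_simp; ring
  linarith

-- key inequality: for 0 < t < 1, 2t < log(1+t) - log(1-t)
lemma aux_two_mul_lt {t : ℝ} (ht0 : 0 < t) (ht1 : t < 1) :
    2*t < Real.log (1+t) - Real.log (1-t) := by
  set h : ℝ → ℝ := fun t => Real.log (1+t) - Real.log (1-t) - 2*t with hh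
  have mono : StrictMonoOn h (Ico (0:ℝ) 1) := by
    apply strictMonoOn_of_deriv_pos (convex_Ico 0 1)
    · apply ContinuousOn.sub
      apply ContinuousOn.sub
      · exact ContinuousOn.log (by fun_prop) (fun y hy => by
          have := hy.1; intro hc; linarith [hc.le, hc.ge])
      · exact ContinuousOn.log (by fun_prop) (fun y hy => by
          have := hy.2; intro hc; linarith [sub_eq_zero.mp hc])
      · fun_prop
    · intro t ht
      rw [interior_Ico] at ht
      obtain ⟨h0, h1⟩ := ht
      have e1 : (0:ℝ) < 1 + t := by linarith
      have e2 : (0:ℝ) < 1 - t := by linarith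
      have H1 : HasDerivAt (fun y : ℝ => Real.log (1+y)) ((1+t)⁻¹ * 1) t :=
        HasDerivAt.comp t (Real.hasDerivAt_log e1.ne') ((hasDerivAt_id t).const_add 1)
      have H2 : HasDerivAt (fun y : ℝ => Real.log (1-y)) ((1-t)⁻¹ * (-1)) t :=
        HasDerivAt.comp t (Real.hasDerivAt_log e2.ne') ((hasDerivAt_id t).const_sub 1)
      have H3 : HasDerivAt h ((1+t)⁻¹ * 1 - (1-t)⁻¹ * (-1) - 2) t := by
        have := (H1.sub H2).sub ((hasDerivAt_id t).const_mul 2)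
        exact this.congr_deriv (by ring)
      rw [H3.deriv]
      have hp : (1+t)*(1-t) < 1 := by nlinarith
      have hpp : 0 < (1+t)*(1-t) := by positivity
      rw [mul_one, mul_neg_one, sub_neg_eq_add]
      have : (1+t)⁻¹ + (1-t)⁻¹ = 2 / ((1+t)*(1-t)) := by field_simp; ring
      rw [this, sub_pos, lt_div_iff₀ hpp]
      nlinarith
  have h0 : h 0 = 0 := by simp [hh]
  have := mono (by constructor <;> norm_num) (⟨ht0.le, ht1⟩) ht0
  rw [h0] at this
  simp only [hh] at this
  linarith

lemma log_gap {x : ℝ} (hx : 1/2 < x) :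
    1/x < Real.log (x+1/2) - Real.log (x-1/2) := by
  have hx0 : 0 < x := by linarith
  have ht0 : 0 < 1/(2*x) := by positivity
  have ht1 : 1/(2*x) < 1 := by rw [div_lt_one (by linarith)]; linarith
  have key := aux_two_mul_lt ht0 ht1
  have e1 : 1 + 1/(2*x) = (x+1/2)/x := by field_simp
  have e2 : 1 - 1/(2*x) = (x-1/2)/x := by field_simp
  rw [e1, e2, Real.log_div (by linarith) hx0.ne', Real.log_div (by linarith) hx0.ne'] at key
  have e3 : 2 * (1/(2*x)) = 1/x := by field_simp
  rw [e3] at key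
  linarith

noncomputable def F (x : ℝ) : ℝ := digamma x - Real.log (x - 1/2)

lemma F_step {x : ℝ} (hx : 1/2 < x) : F (x+1) < F x := by
  have hx0 : 0 < x := by linarith
  unfold F
  rw [digamma_rec hx0]
  have e : x + 1 - 1/2 = x + 1/2 := by ring
  rw [e]
  linarith [log_gap hx]

lemma F_lower {y : ℝ} (hy : 1 < y) : Real.log (y-1) - Real.log (y-1/2) ≤ F y := by
  have h := log_le_digamma (by linarith : (0:ℝ) < y - 1)
  have e : y - 1 + 1 = y := by ring
  rw [e] at h
  unfold F
  linarith

lemma F_nonneg {y : ℝ} (hy : 1 < y) : 0 ≤ F y := by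
  -- F y ≥ F (y + n) ≥ log(y+n-1) - log(y+n-1/2) → 0
  have chain : ∀ n : ℕ, F (y + n) ≤ F y := by
    intro n
    induction n with
    | zero => simp
    | succ k ih =>
      have hk : 1/2 < y + k := by
        have : (0:ℝ) ≤ k := Nat.cast_nonneg k
        linarith
      have := F_step hk
      push_cast
      calc F (y + (k+1)) = F ((y + k) + 1) := by ring_nf
        _ ≤ F (y + k) := this.le
        _ ≤ F y := ih
  have hb : ∀ n : ℕ, Real.log (y+n-1) - Real.log (y+n-1/2) ≤ F y := by
    intro n
    have hn : (0:ℝ) ≤ n := Nat.cast_nonneg n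
    exact le_trans (F_lower (by linarith : 1 < y + n)) (chain n)
  -- tendsto of the lower bound to 0
  have hg : Tendsto (fun n : ℕ => y + (n:ℝ) - 1) atTop atTop := by
    have : Tendsto (fun n : ℕ => (n:ℝ)) atTop atTop := tendsto_natCast_atTop_atTop
    have := tendsto_atTop_add_const_right atTop (y - 1) this
    convert this using 2 with n
    ring
  have htend : Tendsto (fun n : ℕ => Real.log (y+n-1) - Real.log (y+n-1/2)) atTop (nhds 0) := by
    apply tendsto_of_tendsto_of_tendsto_of_le_of_le
      (g := fun n : ℕ => -((1/2) / (y+n-1))) (h := fun _ : ℕ => (0:ℝ))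
    · have : Tendsto (fun n : ℕ => (1/2) / (y+(n:ℝ)-1)) atTop (nhds 0) :=
        Tendsto.div_atTop tendsto_const_nhds hg
      simpa using this.neg
    · exact tendsto_const_nhds
    · intro n
      have hn : (0:ℝ) ≤ n := Nat.cast_nonneg n
      have h1 : (0:ℝ) < y + n - 1 := by linarith
      have h2 : (0:ℝ) < y + n - 1/2 := by linarith
      have := Real.log_le_sub_one_of_pos (show (0:ℝ) < (y+n-1/2)/(y+n-1) by positivity)
      rw [Real.log_div h2.ne' h1.ne'] at this
      have e : (y+n-1/2)/(y+n-1) - 1 = (1/2)/(y+n-1) := by field_simp; ring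
      rw [e] at this
      linarith
    · intro n
      have hn : (0:ℝ) ≤ n := Nat.cast_nonneg n
      have h1 : (0:ℝ) < y + n - 1 := by linarith
      have := Real.log_le_log h1 (by linarith : y+n-1 ≤ y+n-1/2)
      linarith
  exact le_of_tendsto htend (Eventually.of_forall hb)

theorem digamma_log_bounds (x : ℝ) (hx : 1/2 < x) :
    Real.log (x - 1/2) < digamma x ∧ digamma x < Real.log x := by
  constructor
  · have h1 : F (x+1) < F x := F_step hx
    have h2 : 0 ≤ F (x+1) := F_nonneg (by linarith)
    have : 0 < F x := lt_of_le_of_lt h2 h1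
    unfold F at this
    linarith
  · exact digamma_lt_log (by linarith)
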